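/- arXiv:1603.03682 — 2 statements merged into one kernel-verified Lean document; each statement's English description precedes it below -/
import Mathlib

section
/- If 0 < v < β/p₀, then there exists a unique p > 0 satisfying the optimality equation v(p+p₀)² = β(p+p₀) − (1+βp)·log(1+βp); equivalently, F(v,·) has a unique zero in (0,∞). -/
/-- If `0 < v < β/p₀`, then there exists a unique `p > 0` satisfying the
optimality equation `v(p+p₀)² = β(p+p₀) − (1+βp)·log(1+βp)`; equivalently `F(v,·)` has a
unique zero in `(0,∞)`. -/
theorem stmt_3 (β p₀ : ℝ) (hβ : 0 < β) (hp₀ : 0 < p₀) (v : ℝ) (hv : 0 < v)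
    (hv' : v < β / p₀) :
    ∃! p : ℝ, 0 < p ∧
      v * (p + p₀) ^ 2 = β * (p + p₀) - (1 + β * p) * Real.log (1 + β * p) := by
  set g : ℝ → ℝ := fun p =>
    v * (p + p₀) ^ 2 - β * (p + p₀) + (1 + β * p) * Real.log (1 + β * p) with hg
  have hvp : v * p₀ < β := (lt_div_iff₀ hp₀).mp hv'
  have hpos : ∀ p : ℝ, 0 ≤ p → (0:ℝ) < 1 + β * p := by
    intro p hp; nlinarith
  have hderiv : ∀ p : ℝ, 0 ≤ p →
      HasDerivAt g (2 * v * (p + p₀) + β * Real.log (1 + β * p)) p := by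
    intro p hp
    have h1 : HasDerivAt (fun x : ℝ => 1 + β * x) β p := by
      simpa using ((hasDerivAt_id p).const_mul β).const_add 1
    have h2 : HasDerivAt (fun x : ℝ => Real.log (1 + β * x)) (β / (1 + β * p)) p :=
      h1.log (hpos p hp).ne'
    have h3 : HasDerivAt (fun x : ℝ => (1 + β * x) * Real.log (1 + β * x))
        (β * Real.log (1 + β * p) + (1 + β * p) * (β / (1 + β * p))) p := h1.mul h2
    have h4 : HasDerivAt (fun x : ℝ => v * (x + p₀) ^ 2) (v * (2 * (p + p₀))) p := by
      have : HasDerivAt (fun x : ℝ => (x + p₀) ^ 2) (2 * (p + p₀) ^ 1 * 1) p :=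
        ((hasDerivAt_id p).add_const p₀).pow 2
      simpa using this.const_mul v
    have h5 : HasDerivAt (fun x : ℝ => β * (x + p₀)) β p := by
      simpa using ((hasDerivAt_id p).add_const p₀).const_mul β
    have := (h4.sub h5).add h3
    have hne : (1 + β * p) ≠ 0 := (hpos p hp).ne'
    refine this.congr_deriv ?_
    field_simp
    ring
  have hcont : ContinuousOn g (Set.Ici 0) := fun p hp =>
    ((hderiv p hp).continuousAt).continuousWithinAt
  have hmono : StrictMonoOn g (Set.Ici 0) := by
    apply strictMonoOn_of_deriv_pos (convex_Ici 0) hcont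
    intro p hp
    rw [interior_Ici] at hp
    have hp' : 0 < p := hp
    rw [(hderiv p hp.le).deriv]
    have hlog : 0 < Real.log (1 + β * p) :=
      Real.log_pos (by nlinarith)
    nlinarith
  have hg0 : g 0 < 0 := by
    have : g 0 = v * p₀ ^ 2 - β * p₀ := by
      simp [hg, Real.log_one]
    rw [this]; nlinarith
  set P : ℝ := β / v + p₀ with hP
  have hPpos : 0 < P := by positivity
  have hgP : 0 < g P := by
    have hlognn : 0 ≤ (1 + β * P) * Real.log (1 + β * P) := by
      have h1 : (1:ℝ) ≤ 1 + β * P := by nlinarith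
      exact mul_nonneg (by linarith) (Real.log_nonneg h1)
    have hkey : v * (P + p₀) = β + 2 * v * p₀ := by
      rw [hP]; field_simp; ring
    have hkey2 : v * (P + p₀) ^ 2 - β * (P + p₀) = 2 * v * p₀ * (P + p₀) := by
      have h6 : v * (P + p₀) ^ 2 = (β + 2 * v * p₀) * (P + p₀) := by
        rw [← hkey]; ring
      linear_combination h6
    have : 0 < v * (P + p₀) ^ 2 - β * (P + p₀) := by
      rw [hkey2]; positivity
    simp only [hg]; linarith
  obtain ⟨p, hpIoo, hgp⟩ : ∃ p ∈ Set.Ioo (0:ℝ) P, g p = 0 := by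
    have hsub : Set.Ioo (g 0) (g P) ⊆ g '' Set.Ioo 0 P :=
      intermediate_value_Ioo hPpos.le (hcont.mono (Set.Icc_subset_Ici_self))
    have h0mem : (0:ℝ) ∈ Set.Ioo (g 0) (g P) := ⟨hg0, hgP⟩
    obtain ⟨p, hp, hgp⟩ := hsub h0mem
    exact ⟨p, hp, hgp⟩
  refine ⟨p, ⟨hpIoo.1, by simp only [hg] at hgp; linarith⟩, ?_⟩
  intro q ⟨hq, heq⟩
  have hgq : g q = 0 := by simp only [hg]; linarith
  exact hmono.injOn (Set.mem_Ici.mpr hq.le) (Set.mem_Ici.mpr hpIoo.1.le)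
    (by rw [hgq, hgp])
end

section
/- There exists a unique p* > 0 satisfying β(p*+p₀) = (1+βp*)·log(1+βp*), and this p* is the unique global maximizer on [0,∞) of the energy-efficiency function h(p) = log(1+βp)/(p+p₀): for every p ≥ 0 with p ≠ p*, h(p) < h(p*). -/
/-- There exists a unique `p* > 0` satisfying
`β(p*+p₀) = (1+βp*)·log(1+βp*)`, and this `p*` is the unique global maximizer on `[0,∞)`
of the energy-efficiency function `h(p) = log(1+βp)/(p+p₀)`: for every `p ≥ 0` with
`p ≠ p*`, `h(p) < h(p*)`. -/
theorem stmt_7 (β p₀ : ℝ) (hβ : 0 < β) (hp₀ : 0 < p₀) :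
    ∃ pstar : ℝ, 0 < pstar ∧
      β * (pstar + p₀) = (1 + β * pstar) * Real.log (1 + β * pstar) ∧
      (∀ p : ℝ, 0 < p → β * (p + p₀) = (1 + β * p) * Real.log (1 + β * p) → p = pstar) ∧
      ∀ p : ℝ, 0 ≤ p → p ≠ pstar →
        Real.log (1 + β * p) / (p + p₀) < Real.log (1 + β * pstar) / (pstar + p₀) := by
  set g : ℝ → ℝ := fun p => (1 + β * p) * Real.log (1 + β * p) - β * (p + p₀) with hgdef
  have hpos : ∀ p : ℝ, 0 ≤ p → (0 : ℝ) < 1 + β * p := fun p hp => by nlinarith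
  -- derivative of the inner affine map
  have haff : ∀ p : ℝ, HasDerivAt (fun q : ℝ => 1 + β * q) β p := by
    intro p
    simpa using ((hasDerivAt_id p).const_mul β).const_add 1
  have hlog : ∀ p : ℝ, 0 ≤ p →
      HasDerivAt (fun q : ℝ => Real.log (1 + β * q)) (β / (1 + β * p)) p := by
    intro p hp
    exact (haff p).log (hpos p hp).ne'
  have hgderiv : ∀ p : ℝ, 0 ≤ p → HasDerivAt g (β * Real.log (1 + β * p)) p := by
    intro p hp
    have h1 := ((haff p).mul (hlog p hp)).sub
      (((hasDerivAt_id p).add_const p₀).const_mul β)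
    have hne := (hpos p hp).ne'
    refine h1.congr_deriv ?_
    field_simp
    ring
  have hgcont : ContinuousOn g (Set.Ici 0) :=
    fun p hp => (hgderiv p hp).continuousAt.continuousWithinAt
  have hgmono : StrictMonoOn g (Set.Ici 0) := by
    apply strictMonoOn_of_deriv_pos (convex_Ici 0) hgcont
    intro p hp
    rw [interior_Ici] at hp
    rw [(hgderiv p (le_of_lt hp)).deriv]
    have hp' : 0 < p := hp
    have : (1 : ℝ) < 1 + β * p := by nlinarith
    exact mul_pos hβ (Real.log_pos this)
  have hg0 : g 0 = -(β * p₀) := by simp [hgdef]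
  set P : ℝ := (Real.exp 2 - 1) / β + p₀ + 1 with hPdef
  have hexp2 : (1 : ℝ) < Real.exp 2 := by
    have := Real.add_one_lt_exp (x := 2) (by norm_num); linarith
  have hPpos : 0 < P := by
    have h1 : 0 < (Real.exp 2 - 1) / β := div_pos (by linarith) hβ
    have := hp₀; positivity
  have hbP : 1 + β * P = Real.exp 2 + β * (p₀ + 1) := by
    rw [hPdef]
    field_simp
    ring
  have hlogP : (2 : ℝ) ≤ Real.log (1 + β * P) := by
    rw [Real.le_log_iff_exp_le (by nlinarith [hpos P hPpos.le])]
    rw [hbP]; nlinarith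
  have hgP : 0 < g P := by
    have h1 : (0 : ℝ) < 1 + β * P := hpos P hPpos.le
    have h2 : (1 + β * P) * 2 ≤ (1 + β * P) * Real.log (1 + β * P) :=
      mul_le_mul_of_nonneg_left hlogP h1.le
    have h3 : p₀ + 1 ≤ P := by
      have : 0 ≤ (Real.exp 2 - 1) / β := (div_pos (by linarith) hβ).le
      simp [hPdef]; linarith
    simp only [hgdef]
    nlinarith
  -- existence of root
  obtain ⟨pstar, hpmem, hgps⟩ : ∃ p ∈ Set.Icc (0:ℝ) P, g p = 0 := by
    have := intermediate_value_Icc hPpos.le (hgcont.mono Set.Icc_subset_Ici_self)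
    have h0 : (0:ℝ) ∈ Set.Icc (g 0) (g P) := by
      constructor
      · rw [hg0]; nlinarith
      · exact hgP.le
    obtain ⟨p, hp, hgp⟩ := this h0
    exact ⟨p, hp, hgp⟩
  have hps0 : 0 < pstar := by
    rcases lt_or_eq_of_le hpmem.1 with h | h
    · exact h
    · exfalso; rw [← h] at hgps; rw [hg0] at hgps; nlinarith
  have heq : β * (pstar + p₀) = (1 + β * pstar) * Real.log (1 + β * pstar) := by
    have : (1 + β * pstar) * Real.log (1 + β * pstar) - β * (pstar + p₀) = 0 := hgps
    linarith
  refine ⟨pstar, hps0, heq, ?_, ?_⟩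
  · intro p hp hpeq
    have hgp : g p = 0 := by simp only [hgdef]; linarith
    exact hgmono.injOn hp.le (Set.mem_Ici.mpr hps0.le) (by rw [hgp, hgps])
  · -- maximizer
    set h : ℝ → ℝ := fun p => Real.log (1 + β * p) / (p + p₀) with hhdef
    have hden : ∀ p : ℝ, 0 ≤ p → (0:ℝ) < p + p₀ := fun p hp => by linarith
    have hderiv : ∀ p : ℝ, 0 ≤ p → HasDerivAt h
        ((β / (1 + β * p) * (p + p₀) - Real.log (1 + β * p) * 1) / (p + p₀) ^ 2) p := by
      intro p hp
      exact (hlog p hp).div ((hasDerivAt_id p).add_const p₀) (hden p hp).ne'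
    have hcont : ContinuousOn h (Set.Ici 0) :=
      fun p hp => (hderiv p hp).continuousAt.continuousWithinAt
    -- sign of the derivative
    have hsign : ∀ p : ℝ, 0 ≤ p →
        (β / (1 + β * p) * (p + p₀) - Real.log (1 + β * p) * 1)
          = -g p / (1 + β * p) := by
      intro p hp
      have hne := (hpos p hp).ne'
      simp only [hgdef]
      field_simp
      ring
    have hmono : StrictMonoOn h (Set.Icc 0 pstar) := by
      apply strictMonoOn_of_deriv_pos (convex_Icc 0 pstar)
        (hcont.mono (Set.Icc_subset_Ici_self))
      intro p hp
      rw [interior_Icc] at hp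
      rw [(hderiv p hp.1.le).deriv, hsign p hp.1.le]
      have hgneg : g p < 0 := by
        have := hgmono (Set.mem_Ici.mpr hp.1.le) (Set.mem_Ici.mpr hps0.le) hp.2
        rw [hgps] at this; exact this
      exact div_pos (div_pos (by linarith) (hpos p hp.1.le)) (pow_pos (hden p hp.1.le) 2)
    have hanti : StrictAntiOn h (Set.Ici pstar) := by
      apply strictAntiOn_of_deriv_neg (convex_Ici pstar)
        (hcont.mono (Set.Ici_subset_Ici.mpr hps0.le))
      intro p hp
      rw [interior_Ici] at hp
      have hp0 : 0 ≤ p := le_of_lt (lt_trans hps0 hp)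
      rw [(hderiv p hp0).deriv, hsign p hp0]
      have hgpos : 0 < g p := by
        have := hgmono (Set.mem_Ici.mpr hps0.le) (Set.mem_Ici.mpr hp0) hp
        rw [hgps] at this; exact this
      apply div_neg_of_neg_of_pos
      · exact div_neg_of_neg_of_pos (by linarith) (hpos p hp0)
      · exact pow_pos (hden p hp0) 2
    intro p hp hne
    rcases lt_or_gt_of_ne hne with hlt | hgt
    · exact hmono ⟨hp, hlt.le⟩ ⟨hps0.le, le_refl _⟩ hlt
    · exact hanti (Set.mem_Ici.mpr (le_refl _)) (Set.mem_Ici.mpr hgt.le) hgt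
end
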